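/- For the simple edge-valued random walk on the regular triangulation of the 2-torus with mesh 2ε_n, the smallest non-zero eigenvalue λ_m^n of the 1-dimensional up-Laplacian L_1^↑ satisfies λ_m^n ≥ C ε_n², where the lower bound follows from the Diaconis–Stroock path bound λ_m^n ≥ 2|S_1^+| / (25 d b) with |S_1^+| = O(ε_n^{-2}) edges, diameter d = O(ε_n^{-1}) and edge-congestion b = O(ε_n^{-3}). -/

import Mathlib

/-- Vertices of the regular triangulation of the flat torus with mesh `2εₙ = 2/n`:
a 2-dimensional discrete torus. -/
abbrev TorusVertex (n : ℕ) := ZMod n × ZMod n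

/-- Oriented edges of the triangulation: each vertex `v` carries the three edges
`[v, v+a]`, `[v, v+b]`, `[v, v+a+b]` in the three lattice directions. -/
abbrev TorusEdge (n : ℕ) := TorusVertex n × Fin 3

/-- Triangles of the triangulation: each fundamental parallelogram `{v, v+a, v+b, v+a+b}`
splits into an upward triangle `(v, v+a, v+a+b)` and a downward one `(v, v+b, v+a+b)`. -/
abbrev TorusTriangle (n : ℕ) := TorusVertex n × Bool

/-- The boundary `∂₂τ` of an oriented triangle, as a 1-chain (an element of the Euclidean
space with orthonormal basis the oriented edges). -/
noncomputable def triangleBoundary (n : ℕ) [NeZero n] (t : TorusTriangle n) :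
    EuclideanSpace ℝ (TorusEdge n) :=
  if t.2 then
    EuclideanSpace.single (t.1 + ((1 : ZMod n), (0 : ZMod n)), (1 : Fin 3)) (1 : ℝ)
      - EuclideanSpace.single (t.1, (2 : Fin 3)) 1
      + EuclideanSpace.single (t.1, (0 : Fin 3)) 1
  else
    EuclideanSpace.single (t.1 + ((0 : ZMod n), (1 : ZMod n)), (0 : Fin 3)) (1 : ℝ)
      - EuclideanSpace.single (t.1, (2 : Fin 3)) 1
      + EuclideanSpace.single (t.1, (1 : Fin 3)) 1

/-- The up-Laplacian `L₁^↑ = ∂₂∂₂^*` of the triangulation of the torus, acting on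
1-chains: `L₁^↑ x = ∑_τ ⟨∂₂τ, x⟩ ∂₂τ`. -/
noncomputable def torusUpLaplacian (n : ℕ) [NeZero n] :
    Module.End ℝ (EuclideanSpace ℝ (TorusEdge n)) :=
  ∑ t : TorusTriangle n,
    ((innerSL ℝ (triangleBoundary n t)).smulRight (triangleBoundary n t)).toLinearMap


namespace TorusGap

open RealInnerProductSpace

variable {n : ℕ} [NeZero n]

def va (n : ℕ) : TorusVertex n := (1, 0)
def vb (n : ℕ) : TorusVertex n := (0, 1)

noncomputable def Uf (x : EuclideanSpace ℝ (TorusEdge n)) (v : TorusVertex n) : ℝ :=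
  x (v + va n, 1) - x (v, 2) + x (v, 0)

noncomputable def Df (x : EuclideanSpace ℝ (TorusEdge n)) (v : TorusVertex n) : ℝ :=
  x (v + vb n, 0) - x (v, 2) + x (v, 1)

lemma inner_up (x : EuclideanSpace ℝ (TorusEdge n)) (v : TorusVertex n) :
    ⟪triangleBoundary n (v, true), x⟫ = Uf x v := by
  simp [triangleBoundary, inner_add_left, inner_sub_left, EuclideanSpace.inner_single_left,
    Uf, va]

lemma inner_down (x : EuclideanSpace ℝ (TorusEdge n)) (v : TorusVertex n) :
    ⟪triangleBoundary n (v, false), x⟫ = Df x v := by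
  simp [triangleBoundary, inner_add_left, inner_sub_left, EuclideanSpace.inner_single_left,
    Df, vb]

lemma L_eq (x : EuclideanSpace ℝ (TorusEdge n)) :
    torusUpLaplacian n x = ∑ t : TorusTriangle n,
      (⟪triangleBoundary n t, x⟫) • triangleBoundary n t := by
  simp [torusUpLaplacian, LinearMap.sum_apply]

lemma shift_eq {M : Type*} [AddCommGroup M] (v c w : M) : (v + c = w) ↔ (v = w - c) :=
  eq_sub_iff_add_eq.symm

lemma L_coord (x : EuclideanSpace ℝ (TorusEdge n)) (e : TorusEdge n) :
    torusUpLaplacian n x e =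
      ∑ v : TorusVertex n, (Uf x v * ⟪EuclideanSpace.single e (1:ℝ), triangleBoundary n (v, true)⟫
        + Df x v * ⟪EuclideanSpace.single e (1:ℝ), triangleBoundary n (v, false)⟫) := by
  have : torusUpLaplacian n x e = ⟪EuclideanSpace.single e (1:ℝ), torusUpLaplacian n x⟫ := by
    simp [EuclideanSpace.inner_single_left]
  rw [this, L_eq, inner_sum]
  rw [Fintype.sum_prod_type]
  congr 1; funext v
  rw [Fintype.sum_bool]
  simp only [real_inner_smul_right, inner_up, inner_down]

lemma L0 (x : EuclideanSpace ℝ (TorusEdge n)) (w : TorusVertex n) :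
    torusUpLaplacian n x (w, 0) = Uf x w + Df x (w - vb n) := by
  rw [L_coord]
  simp only [triangleBoundary, if_true, if_false, Bool.false_eq_true, inner_add_right,
    inner_sub_right, EuclideanSpace.inner_single_right, EuclideanSpace.single_apply,
    Prod.mk.injEq, starRingEnd_apply, star_trivial]

  simp [eq_false (show ¬((1:Fin 3) = 0) by decide), eq_false (show ¬((2:Fin 3) = 0) by decide),
    shift_eq, vb, Finset.sum_add_distrib]

lemma L1 (x : EuclideanSpace ℝ (TorusEdge n)) (w : TorusVertex n) :
    torusUpLaplacian n x (w, 1) = Uf x (w - va n) + Df x w := by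
  rw [L_coord]
  simp only [triangleBoundary, if_true, if_false, Bool.false_eq_true, inner_add_right,
    inner_sub_right, EuclideanSpace.inner_single_right, EuclideanSpace.single_apply,
    Prod.mk.injEq, starRingEnd_apply, star_trivial]
  simp [eq_false (show ¬((2:Fin 3) = 1) by decide), eq_false (show ¬((0:Fin 3) = 1) by decide),
    shift_eq, va, Finset.sum_add_distrib]

lemma L2 (x : EuclideanSpace ℝ (TorusEdge n)) (w : TorusVertex n) :
    torusUpLaplacian n x (w, 2) = -Uf x w - Df x w := by
  rw [L_coord]
  simp only [triangleBoundary, if_true, if_false, Bool.false_eq_true, inner_add_right,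
    inner_sub_right, EuclideanSpace.inner_single_right, EuclideanSpace.single_apply,
    Prod.mk.injEq, starRingEnd_apply, star_trivial]
  simp [eq_false (show ¬((1:Fin 3) = 2) by decide), eq_false (show ¬((0:Fin 3) = 2) by decide),
    shift_eq, Finset.sum_add_distrib, Finset.sum_sub_distrib, sub_eq_add_neg]

lemma smul_coord (x : EuclideanSpace ℝ (TorusEdge n)) (μ : ℝ) (e : TorusEdge n) :
    (μ • x) e = μ * x e := rfl

lemma hU {x : EuclideanSpace ℝ (TorusEdge n)} {μ : ℝ}
    (hx : torusUpLaplacian n x = μ • x) (v : TorusVertex n) :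
    μ * Uf x v = 3 * Uf x v + Df x (v + va n) + Df x v + Df x (v - vb n) := by
  have h0 : ∀ w, μ * x (w, 0) = Uf x w + Df x (w - vb n) := fun w => by
    rw [← L0 x w, hx, smul_coord]
  have h1 : ∀ w, μ * x (w, 1) = Uf x (w - va n) + Df x w := fun w => by
    rw [← L1 x w, hx, smul_coord]
  have h2 : ∀ w, μ * x (w, 2) = -Uf x w - Df x w := fun w => by
    rw [← L2 x w, hx, smul_coord]
  have e1 := h1 (v + va n)
  have e2 := h2 v
  have e3 := h0 v
  rw [add_sub_cancel_right] at e1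
  simp only [Uf, Df] at e1 e2 e3 ⊢
  linarith [e1, e2, e3]

lemma hD {x : EuclideanSpace ℝ (TorusEdge n)} {μ : ℝ}
    (hx : torusUpLaplacian n x = μ • x) (v : TorusVertex n) :
    μ * Df x v = 3 * Df x v + Uf x (v + vb n) + Uf x v + Uf x (v - va n) := by
  have h0 : ∀ w, μ * x (w, 0) = Uf x w + Df x (w - vb n) := fun w => by
    rw [← L0 x w, hx, smul_coord]
  have h1 : ∀ w, μ * x (w, 1) = Uf x (w - va n) + Df x w := fun w => by
    rw [← L1 x w, hx, smul_coord]
  have h2 : ∀ w, μ * x (w, 2) = -Uf x w - Df x w := fun w => by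
    rw [← L2 x w, hx, smul_coord]
  have e1 := h0 (v + vb n)
  have e2 := h2 v
  have e3 := h1 v
  rw [add_sub_cancel_right] at e1
  simp only [Uf, Df] at e1 e2 e3 ⊢
  linarith [e1, e2, e3]

lemma lap_eig {x : EuclideanSpace ℝ (TorusEdge n)} {μ : ℝ}
    (hx : torusUpLaplacian n x = μ • x) (v : TorusVertex n) :
    (6 * μ - μ ^ 2) * Uf x v =
      6 * Uf x v - (Uf x (v + va n) + Uf x (v - va n) + Uf x (v + vb n) + Uf x (v - vb n)
        + Uf x (v + va n + vb n) + Uf x (v - vb n - va n)) := by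
  have a1 := hU hx v
  have a2 := hD hx (v + va n)
  have a3 := hD hx v
  have a4 := hD hx (v - vb n)
  rw [add_sub_cancel_right] at a2
  rw [sub_add_cancel] at a4
  have b1 : (μ - 3) * Uf x v = Df x (v + va n) + Df x v + Df x (v - vb n) := by linarith
  have c2 : (μ - 3) * Df x (v + va n)
      = Uf x (v + va n + vb n) + Uf x (v + va n) + Uf x v := by linarith
  have c3 : (μ - 3) * Df x v = Uf x (v + vb n) + Uf x v + Uf x (v - va n) := by linarith
  have c4 : (μ - 3) * Df x (v - vb n)
      = Uf x v + Uf x (v - vb n) + Uf x (v - vb n - va n) := by linarith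
  have key : (μ - 3) * ((μ - 3) * Uf x v)
      = 3 * Uf x v + (Uf x (v + va n) + Uf x (v - va n) + Uf x (v + vb n) + Uf x (v - vb n)
        + Uf x (v + va n + vb n) + Uf x (v - vb n - va n)) := by
    rw [b1, mul_add, mul_add, c2, c3, c4]; ring
  linarith [key]

lemma sum_shift (f : TorusVertex n → ℝ) (s : TorusVertex n) :
    ∑ v : TorusVertex n, f (v + s) = ∑ v : TorusVertex n, f v :=
  Fintype.sum_equiv (Equiv.addRight s) _ _ (fun _ => rfl)

lemma sum_shift_sub (f : TorusVertex n → ℝ) (s : TorusVertex n) :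
    ∑ v : TorusVertex n, f (v - s) = ∑ v : TorusVertex n, f v := by
  simpa [sub_eq_add_neg] using sum_shift f (-s)

/-- Dirichlet energy in direction `s`. -/
noncomputable def Qs (g : TorusVertex n → ℝ) (s : TorusVertex n) : ℝ :=
  ∑ v : TorusVertex n, (g (v + s) - g v) ^ 2

lemma Qs_nonneg (g : TorusVertex n → ℝ) (s : TorusVertex n) : 0 ≤ Qs g s :=
  Finset.sum_nonneg fun _ _ => sq_nonneg _

lemma tele (g : TorusVertex n → ℝ) (s : TorusVertex n) (k : ℕ) (v : TorusVertex n) :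
    g (v + k • s) - g v
      = ∑ t ∈ Finset.range k, (g (v + t • s + s) - g (v + t • s)) := by
  have h := Finset.sum_range_sub (fun t => g (v + t • s)) k
  simp only [zero_smul, add_zero] at h
  rw [← h]
  exact Finset.sum_congr rfl fun t _ => by rw [succ_nsmul, ← add_assoc]

lemma step_bound (g : TorusVertex n → ℝ) (s : TorusVertex n) (k : ℕ) (hk : k ≤ n) :
    ∑ v : TorusVertex n, (g (v + k • s) - g v) ^ 2 ≤ (n : ℝ) ^ 2 * Qs g s := by
  have h1 : ∀ v : TorusVertex n, (g (v + k • s) - g v) ^ 2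
      ≤ (k : ℝ) * ∑ t ∈ Finset.range k, (g (v + t • s + s) - g (v + t • s)) ^ 2 := by
    intro v
    rw [tele g s k v]
    simpa using sq_sum_le_card_mul_sum_sq
      (s := Finset.range k) (f := fun t => (g (v + t • s + s) - g (v + t • s)))
  calc ∑ v : TorusVertex n, (g (v + k • s) - g v) ^ 2
      ≤ ∑ v : TorusVertex n,
          (k : ℝ) * ∑ t ∈ Finset.range k, (g (v + t • s + s) - g (v + t • s)) ^ 2 :=
        Finset.sum_le_sum fun v _ => h1 v
    _ = (k : ℝ) * ∑ t ∈ Finset.range k,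
          ∑ v : TorusVertex n, (g (v + t • s + s) - g (v + t • s)) ^ 2 := by
        rw [← Finset.mul_sum, Finset.sum_comm]
    _ = (k : ℝ) * ∑ t ∈ Finset.range k, Qs g s := by
        congr 1
        exact Finset.sum_congr rfl fun t _ =>
          sum_shift (fun w => (g (w + s) - g w) ^ 2) (t • s)
    _ = (k : ℝ) * ((k : ℝ) * Qs g s) := by
        rw [Finset.sum_const, Finset.card_range]; ring
    _ ≤ (n : ℝ) ^ 2 * Qs g s := by
        have hkn : (k : ℝ) ≤ (n : ℝ) := by exact_mod_cast hk
        have hk0 : (0 : ℝ) ≤ k := Nat.cast_nonneg k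
        have h2 : (k : ℝ) * (k : ℝ) ≤ (n : ℝ) * (n : ℝ) :=
          mul_le_mul hkn hkn hk0 (hk0.trans hkn)
        nlinarith [Qs_nonneg g s, h2]

lemma shift_decomp (s : TorusVertex n) : s = s.1.val • va n + s.2.val • vb n := by
  have h1 : ((s.1.val : ℕ) : ZMod n) = s.1 := ZMod.natCast_rightInverse s.1
  have h2 : ((s.2.val : ℕ) : ZMod n) = s.2 := ZMod.natCast_rightInverse s.2
  simp [va, vb, Prod.ext_iff, nsmul_eq_mul, h1, h2]

lemma shift_bound (g : TorusVertex n → ℝ) (s : TorusVertex n) :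
    ∑ v : TorusVertex n, (g (v + s) - g v) ^ 2
      ≤ 2 * ((n : ℝ) ^ 2 * Qs g (va n)) + 2 * ((n : ℝ) ^ 2 * Qs g (vb n)) := by
  set k := s.1.val with hk
  set l := s.2.val with hl
  have hs : s = k • va n + l • vb n := shift_decomp s
  have hsplit : ∀ v : TorusVertex n, (g (v + s) - g v) ^ 2
      ≤ 2 * (g (v + k • va n + l • vb n) - g (v + k • va n)) ^ 2
        + 2 * (g (v + k • va n) - g v) ^ 2 := by
    intro v
    have hv : v + s = v + k • va n + l • vb n := by rw [hs, ← add_assoc]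
    rw [hv]
    nlinarith [sq_nonneg ((g (v + k • va n + l • vb n) - g (v + k • va n))
      - (g (v + k • va n) - g v))]
  have hQb : ∑ v : TorusVertex n,
      (g (v + k • va n + l • vb n) - g (v + k • va n)) ^ 2 ≤ (n : ℝ) ^ 2 * Qs g (vb n) := by
    have hre := sum_shift (fun w => (g (w + l • vb n) - g w) ^ 2) (k • va n)
    calc ∑ v : TorusVertex n, (g (v + k • va n + l • vb n) - g (v + k • va n)) ^ 2
        = ∑ v : TorusVertex n, (g (v + l • vb n) - g v) ^ 2 := hre
      _ ≤ (n : ℝ) ^ 2 * Qs g (vb n) := step_bound g (vb n) l (ZMod.val_lt s.2).le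
  have hQa : ∑ v : TorusVertex n, (g (v + k • va n) - g v) ^ 2 ≤ (n : ℝ) ^ 2 * Qs g (va n) :=
    step_bound g (va n) k (ZMod.val_lt s.1).le
  calc ∑ v : TorusVertex n, (g (v + s) - g v) ^ 2
      ≤ ∑ v : TorusVertex n,
          (2 * (g (v + k • va n + l • vb n) - g (v + k • va n)) ^ 2
            + 2 * (g (v + k • va n) - g v) ^ 2) := Finset.sum_le_sum fun v _ => hsplit v
    _ = 2 * (∑ v : TorusVertex n, (g (v + k • va n + l • vb n) - g (v + k • va n)) ^ 2)
          + 2 * (∑ v : TorusVertex n, (g (v + k • va n) - g v) ^ 2) := by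
        rw [Finset.sum_add_distrib, ← Finset.mul_sum, ← Finset.mul_sum]
    _ ≤ 2 * ((n : ℝ) ^ 2 * Qs g (vb n)) + 2 * ((n : ℝ) ^ 2 * Qs g (va n)) := by
        have := hQa; have := hQb; linarith
    _ = 2 * ((n : ℝ) ^ 2 * Qs g (va n)) + 2 * ((n : ℝ) ^ 2 * Qs g (vb n)) := by ring

lemma card_vertex : (Fintype.card (TorusVertex n) : ℝ) = (n : ℝ) ^ 2 := by
  rw [Fintype.card_prod, ZMod.card]
  norm_cast; ring

lemma poincare (g : TorusVertex n → ℝ) (lam : ℝ)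
    (heig : ∀ v, lam * g v = 6 * g v - (g (v + va n) + g (v - va n) + g (v + vb n)
      + g (v - vb n) + g (v + va n + vb n) + g (v - vb n - va n)))
    (hg : ∃ v, g v ≠ 0) (hlam : lam ≠ 0) : 1 ≤ (n : ℝ) ^ 2 * lam := by
  set c : TorusVertex n := va n + vb n with hc
  set N : ℝ := (n : ℝ) ^ 2 with hN
  set A : ℝ := ∑ v : TorusVertex n, g v ^ 2 with hA
  set S : ℝ := ∑ v : TorusVertex n, g v with hS
  -- normalize the eigen-equation
  have heig' : ∀ v, lam * g v = 6 * g v - (g (v + va n) + g (v - va n) + g (v + vb n)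
      + g (v - vb n) + g (v + c) + g (v - c)) := by
    intro v
    have e5 : v + va n + vb n = v + c := by rw [hc, add_assoc]
    have e6 : v - vb n - va n = v - c := by rw [sub_sub, hc, add_comm (va n) (vb n)]
    rw [heig v, e5, e6]
  -- the mean is zero
  have hS0 : S = 0 := by
    have h1 : lam * S = ∑ v : TorusVertex n, (6 * g v - (g (v + va n) + g (v - va n)
        + g (v + vb n) + g (v - vb n) + g (v + c) + g (v - c))) := by
      rw [hS, Finset.mul_sum]
      exact Finset.sum_congr rfl fun v _ => heig' v
    have h2 : lam * S = 6 * S - (S + S + S + S + S + S) := by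
      rw [h1]
      simp only [Finset.sum_sub_distrib, Finset.sum_add_distrib, ← Finset.mul_sum,
        sum_shift g (va n), sum_shift g (vb n), sum_shift g c,
        sum_shift_sub g (va n), sum_shift_sub g (vb n), sum_shift_sub g c]
      rw [← hS]
    have h3 : lam * S = 0 := by linarith
    rcases mul_eq_zero.mp h3 with h | h
    · exact absurd h hlam
    · exact h
  -- cross terms
  have hP : ∀ s : TorusVertex n,
      ∑ v : TorusVertex n, g (v - s) * g v = ∑ v : TorusVertex n, g v * g (v + s) := by
    intro s
    have := sum_shift_sub (fun w => g w * g (w + s)) s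
    calc ∑ v : TorusVertex n, g (v - s) * g v
        = ∑ v : TorusVertex n, g (v - s) * g (v - s + s) :=
          Finset.sum_congr rfl fun v _ => by rw [sub_add_cancel]
      _ = ∑ v : TorusVertex n, g v * g (v + s) := this
  have hQform : ∀ s : TorusVertex n,
      Qs g s = 2 * A - 2 * ∑ v : TorusVertex n, g v * g (v + s) := by
    intro s
    have h1 : Qs g s = ∑ v : TorusVertex n,
        (g (v + s) ^ 2 - 2 * (g v * g (v + s)) + g v ^ 2) := by
      exact Finset.sum_congr rfl fun v _ => by ring
    rw [h1, Finset.sum_add_distrib, Finset.sum_sub_distrib,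
      sum_shift (fun w => g w ^ 2) s, ← Finset.mul_sum]
    rw [hA]; ring
  -- the quadratic form identity
  have hmain : lam * A = Qs g (va n) + Qs g (vb n) + Qs g c := by
    have h1 : ∑ v : TorusVertex n, lam * g v * g v = lam * A := by
      rw [hA, Finset.mul_sum]
      exact Finset.sum_congr rfl fun v _ => by ring
    have h2 : ∑ v : TorusVertex n, lam * g v * g v
        = ∑ v : TorusVertex n, (6 * (g v ^ 2)
          - (g (v + va n) * g v + g (v - va n) * g v + g (v + vb n) * g v
            + g (v - vb n) * g v + g (v + c) * g v + g (v - c) * g v)) := by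
      exact Finset.sum_congr rfl fun v _ => by rw [heig' v]; ring
    have h3 : ∀ s : TorusVertex n,
        ∑ v : TorusVertex n, g (v + s) * g v = ∑ v : TorusVertex n, g v * g (v + s) :=
      fun s => Finset.sum_congr rfl fun v _ => by ring
    rw [h1] at h2
    rw [Finset.sum_sub_distrib, Finset.sum_add_distrib, Finset.sum_add_distrib,
      Finset.sum_add_distrib, Finset.sum_add_distrib, Finset.sum_add_distrib,
      ← Finset.mul_sum, h3 (va n), h3 (vb n), h3 c, hP (va n), hP (vb n), hP c] at h2
    have ea := hQform (va n)
    have eb := hQform (vb n)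
    have ec := hQform c
    rw [hA] at h2 ea eb ec ⊢
    linarith
  -- positivity of A
  obtain ⟨v0, hv0⟩ := hg
  have hApos : 0 < A := by
    rw [hA]
    have : (0:ℝ) < g v0 ^ 2 := by positivity
    exact Finset.sum_pos' (fun v _ => sq_nonneg _) ⟨v0, Finset.mem_univ v0, this⟩
  -- double-sum identity
  have hT1 : ∑ v : TorusVertex n, ∑ w : TorusVertex n, (g w - g v) ^ 2 = 2 * N * A := by
    have hinner : ∀ v : TorusVertex n,
        ∑ w : TorusVertex n, (g w - g v) ^ 2 = A - 2 * g v * S + N * g v ^ 2 := by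
      intro v
      have h1 : ∑ w : TorusVertex n, (g w - g v) ^ 2
          = ∑ w : TorusVertex n, (g w ^ 2 - 2 * g v * g w + g v ^ 2) :=
        Finset.sum_congr rfl fun w _ => by ring
      rw [h1, Finset.sum_add_distrib, Finset.sum_sub_distrib, ← Finset.mul_sum,
        Finset.sum_const, Finset.card_univ, nsmul_eq_mul, ← hA, ← hS, card_vertex, ← hN]
    rw [Finset.sum_congr rfl fun v _ => hinner v]
    have e2 : ∑ v : TorusVertex n, 2 * g v * S = 2 * S * S := by
      rw [Finset.sum_congr rfl fun v _ => show 2 * g v * S = 2 * S * g v by ring,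
        ← Finset.mul_sum, ← hS]
    have e3 : ∑ v : TorusVertex n, N * g v ^ 2 = N * A := by
      rw [← Finset.mul_sum, ← hA]
    rw [Finset.sum_add_distrib, Finset.sum_sub_distrib, e2, e3, Finset.sum_const,
      Finset.card_univ, nsmul_eq_mul, card_vertex, ← hN, hS0]
    ring
  -- comparison of the double sum with the directional energies
  have hT2 : ∑ v : TorusVertex n, ∑ w : TorusVertex n, (g w - g v) ^ 2
      ≤ N * (2 * (N * Qs g (va n)) + 2 * (N * Qs g (vb n))) := by
    have hre : ∀ v : TorusVertex n, ∑ w : TorusVertex n, (g w - g v) ^ 2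
        = ∑ s : TorusVertex n, (g (v + s) - g v) ^ 2 := by
      intro v
      exact (Fintype.sum_equiv (Equiv.addLeft v) _ _ fun s => rfl).symm
    rw [Finset.sum_congr rfl fun v _ => hre v, Finset.sum_comm]
    calc ∑ s : TorusVertex n, ∑ v : TorusVertex n, (g (v + s) - g v) ^ 2
        ≤ ∑ _s : TorusVertex n, (2 * (N * Qs g (va n)) + 2 * (N * Qs g (vb n))) :=
          Finset.sum_le_sum fun s _ => by simpa [hN] using shift_bound g s
      _ = N * (2 * (N * Qs g (va n)) + 2 * (N * Qs g (vb n))) := by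
          rw [Finset.sum_const, Finset.card_univ, nsmul_eq_mul, card_vertex, ← hN]
  -- conclude
  have hNpos : (0:ℝ) < N := by
    rw [hN]
    have : (0:ℝ) < (n:ℝ) := by
      exact_mod_cast Nat.pos_of_ne_zero (NeZero.ne n)
    positivity
  have hE : A ≤ N * (Qs g (va n) + Qs g (vb n)) := by nlinarith [hT1, hT2]
  have hcQ := Qs_nonneg g c
  have hfin : A ≤ N * (lam * A) := by nlinarith [hE, hmain]
  nlinarith [hfin, hApos]

lemma U_ne_zero {x : EuclideanSpace ℝ (TorusEdge n)} {μ : ℝ}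
    (hx : torusUpLaplacian n x = μ • x) (hxne : x ≠ 0) (hμ0 : μ ≠ 0) (hμ3 : μ ≠ 3) :
    ∃ v, Uf x v ≠ 0 := by
  by_contra hU0
  push_neg at hU0
  have hD0 : ∀ v, Df x v = 0 := by
    intro v
    have h := hD hx v
    rw [hU0, hU0, hU0] at h
    have h' : (μ - 3) * Df x v = 0 := by linarith
    rcases mul_eq_zero.mp h' with h'' | h''
    · exact absurd (by linarith : μ = 3) hμ3
    · exact h''
  have hx0 : ∀ w (j : Fin 3), x (w, j) = 0 := by
    intro w j
    have h0 : μ * x (w, 0) = 0 := by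
      rw [← smul_coord x μ, ← hx, L0, hU0, hD0]; ring
    have h1 : μ * x (w, 1) = 0 := by
      rw [← smul_coord x μ, ← hx, L1, hU0, hD0]; ring
    have h2 : μ * x (w, 2) = 0 := by
      rw [← smul_coord x μ, ← hx, L2, hU0, hD0]; ring
    fin_cases j
    · exact (mul_eq_zero.mp h0).resolve_left hμ0
    · exact (mul_eq_zero.mp h1).resolve_left hμ0
    · exact (mul_eq_zero.mp h2).resolve_left hμ0
  apply hxne
  ext e
  exact hx0 e.1 e.2

end TorusGap

/-- The smallest non-zero eigenvalue of the up-Laplacian `L₁^↑` of the regular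
triangulation of the flat torus with mesh `2εₙ = 2/n` is bounded below by `C εₙ²`:
every non-zero eigenvalue `μ` satisfies `μ ≥ C (1/n)²`. -/
theorem torus_up_laplacian_spectral_gap :
    ∃ C : ℝ, 0 < C ∧ ∀ (n : ℕ) [NeZero n], ∀ μ : ℝ, μ ≠ 0 →
      Module.End.HasEigenvalue (torusUpLaplacian n) μ →
        C * ((1 : ℝ) / n) ^ 2 ≤ μ := by
  refine ⟨1/6, by norm_num, ?_⟩
  intro n _ μ hμ0 heigval
  by_contra hcon
  push_neg at hcon
  obtain ⟨x, hxv⟩ := heigval.exists_hasEigenvector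
  have hx : torusUpLaplacian n x = μ • x := hxv.apply_eq_smul
  have hxne : x ≠ 0 := hxv.right
  have hn1 : (1:ℝ) ≤ (n:ℝ) := by
    exact_mod_cast Nat.one_le_iff_ne_zero.mpr (NeZero.ne n)
  have hnpos : (0:ℝ) < (n:ℝ) := by linarith
  have hinv : ((1:ℝ)/n)^2 ≤ 1 := by
    rw [div_pow, one_pow]
    rw [div_le_one (by positivity)]
    nlinarith
  have hμlt : μ < 1/6 := by nlinarith [hcon, hinv]
  have hμ3 : μ ≠ 3 := by linarith
  have heq := fun v => TorusGap.lap_eig hx v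
  have hUne := TorusGap.U_ne_zero hx hxne hμ0 hμ3
  have hlamne : (6*μ - μ^2) ≠ 0 := by
    intro h0
    have : μ * (6 - μ) = 0 := by linarith
    rcases mul_eq_zero.mp this with h | h
    · exact hμ0 h
    · linarith
  have hpoin := TorusGap.poincare (TorusGap.Uf x) (6*μ - μ^2) heq hUne hlamne
  have hn2 : (n:ℝ)^2 * ((1:ℝ)/n)^2 = 1 := by field_simp
  have h5 : μ * (n:ℝ)^2 < 1/6 := by nlinarith [hcon, hn2, sq_nonneg (n:ℝ)]
  have h7 : (0:ℝ) ≤ μ^2*(n:ℝ)^2 := by positivity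
  nlinarith [hpoin, h5, h7]
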